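/- arXiv:math/0410131 — 2 statements merged into one kernel-verified Lean document; each statement's English description precedes it below -/
import Mathlib

section
/- There exist constants 0 < γ₂ ≤ γ₁ < ∞, depending only on n, such that for all α ≥ 1 and 0 ≤ β ≤ 1, the outer-boundary derivative u'(1+α+β; α, β) of the harmonic barrier satisfies -γ₁ ≤ u'(1+α+β; α, β) ≤ -γ₂ < 0. -/
theorem stmt_9 (n : ℕ) (hn : 2 < n) :
    ∃ γ₁ γ₂ : ℝ, 0 < γ₂ ∧ γ₂ ≤ γ₁ ∧
      ∀ α β : ℝ, 1 ≤ α → 0 ≤ β → β ≤ 1 →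
        -γ₁ ≤ ((2 : ℝ) - n) * (1 + α + β) ^ ((1 : ℝ) - n) /
            (α ^ ((2 : ℝ) - n) - (1 + α + β) ^ ((2 : ℝ) - n)) ∧
        ((2 : ℝ) - n) * (1 + α + β) ^ ((1 : ℝ) - n) /
            (α ^ ((2 : ℝ) - n) - (1 + α + β) ^ ((2 : ℝ) - n)) ≤ -γ₂ := by
  obtain ⟨m, rfl⟩ : ∃ m, n = m + 3 := ⟨n - 3, by omega⟩
  refine ⟨1, 1 / (2 * 3 ^ (m + 1)), by positivity, by
    rw [div_le_one (by positivity)]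
    nlinarith [pow_pos (by norm_num : (0:ℝ) < 3) (m+1),
      one_le_pow₀ (by norm_num : (1:ℝ) ≤ 3) (n := m+1)], ?_⟩
  intro α β hα hβ0 hβ1
  set r : ℝ := 1 + α + β with hr
  have hα0 : (0:ℝ) < α := by linarith
  have hr0 : (0:ℝ) < r := by simp [hr]; linarith
  have hαr : α < r := by simp [hr]; linarith
  have hr3 : r ≤ 3 * α := by simp [hr]; linarith
  -- rewrite rpow to pow
  have hcast : ((m + 3 : ℕ) : ℝ) = (m : ℝ) + 3 := by push_cast; ring
  have e1 : r ^ ((1 : ℝ) - (m + 3 : ℕ)) = (r ^ (m + 2))⁻¹ := by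
    rw [show (1 : ℝ) - ((m + 3 : ℕ) : ℝ) = -((m + 2 : ℕ) : ℝ) by push_cast; ring,
      Real.rpow_neg hr0.le, Real.rpow_natCast]
  have e2 : ∀ x : ℝ, 0 < x → x ^ ((2 : ℝ) - (m + 3 : ℕ)) = (x ^ (m + 1))⁻¹ := by
    intro x hx
    rw [show (2 : ℝ) - ((m + 3 : ℕ) : ℝ) = -((m + 1 : ℕ) : ℝ) by push_cast; ring,
      Real.rpow_neg hx.le, Real.rpow_natCast]
  have hD : (0:ℝ) < r ^ (m + 1) - α ^ (m + 1) := by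
    have := pow_lt_pow_left₀ hαr hα0.le (n := m + 1) (by omega)
    linarith
  have key : ((2 : ℝ) - (m + 3 : ℕ)) * r ^ ((1 : ℝ) - (m + 3 : ℕ)) /
      (α ^ ((2 : ℝ) - (m + 3 : ℕ)) - r ^ ((2 : ℝ) - (m + 3 : ℕ)))
      = -(((m : ℝ) + 1) * α ^ (m + 1) / (r * (r ^ (m + 1) - α ^ (m + 1)))) := by
    rw [e1, e2 α hα0, e2 r hr0, hcast]
    have h1 : (0:ℝ) < (α ^ (m+1))⁻¹ - (r ^ (m+1))⁻¹ := by
      rw [sub_pos, inv_lt_inv₀ (by positivity) (by positivity)]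
      exact pow_lt_pow_left₀ hαr hα0.le (by omega)
    have h2 : (α ^ (m+1))⁻¹ - (r ^ (m+1))⁻¹ ≠ 0 := ne_of_gt h1
    field_simp
    ring
  rw [key]
  -- Bernoulli facts
  have f1 : α ^ (m + 1) + ((m : ℝ) + 1) * (r - α) * α ^ m ≤ r ^ (m + 1) := by
    have hB := one_add_mul_le_pow (a := (r - α) / α) (by
      have : 0 ≤ (r - α) / α := div_nonneg (by linarith) hα0.le
      linarith) (m + 1)
    push_cast at hB
    rw [show (1 : ℝ) + (r - α) / α = r / α by field_simp; ring, div_pow] at hB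
    have h := mul_le_mul_of_nonneg_right hB (le_of_lt (pow_pos hα0 (m+1)))
    rw [div_mul_cancel₀ _ (by positivity)] at h
    have expand : (1 + ((m:ℝ)+1) * ((r - α)/α)) * α ^ (m+1)
        = α ^ (m + 1) + ((m : ℝ) + 1) * (r - α) * α ^ m := by
      rw [pow_succ]; field_simp
    rw [expand] at h
    exact h
  have f2 : r ^ (m + 1) + ((m : ℝ) + 1) * (α - r) * r ^ m ≤ α ^ (m + 1) := by
    have hB := one_add_mul_le_pow (a := (α - r) / r) (by
      have h1 : -1 ≤ (α - r) / r := by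
        rw [le_div_iff₀ hr0]
        linarith
      linarith) (m + 1)
    push_cast at hB
    rw [show (1 : ℝ) + (α - r) / r = α / r by field_simp; ring, div_pow] at hB
    have h := mul_le_mul_of_nonneg_right hB (le_of_lt (pow_pos hr0 (m+1)))
    rw [div_mul_cancel₀ _ (by positivity)] at h
    have expand : (1 + ((m:ℝ)+1) * ((α - r)/r)) * r ^ (m+1)
        = r ^ (m + 1) + ((m : ℝ) + 1) * (α - r) * r ^ m := by
      rw [pow_succ]; field_simp
    rw [expand] at h
    exact h
  have hrα1 : 1 ≤ r - α := by simp [hr]; linarith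
  have hrα2 : r - α ≤ 2 := by simp [hr]; linarith
  have hαm : (0:ℝ) < α ^ m := pow_pos hα0 m
  have hαm1 : (0:ℝ) < α ^ (m+1) := pow_pos hα0 (m+1)
  have hαpow : α ^ (m+1) = α ^ m * α := pow_succ α m
  constructor
  · -- -1 ≤ -X, i.e. X ≤ 1
    rw [neg_le_neg_iff, div_le_one (by positivity)]
    have hra : α ≤ (r - α) * r := by nlinarith
    have h2 := mul_le_mul_of_nonneg_left (mul_le_mul_of_nonneg_left hra hαm.le)
      (show (0:ℝ) ≤ (m:ℝ)+1 by positivity)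
    have h3 := mul_le_mul_of_nonneg_left
      (show ((m:ℝ)+1) * (r-α) * α^m ≤ r^(m+1) - α^(m+1) by linarith [f1]) hr0.le
    nlinarith [h2, h3, hαpow]
  · rw [neg_le_neg_iff, le_div_iff₀ (by positivity)]
    have hr3p : r ^ (m+1) ≤ 3 ^ (m+1) * α ^ (m+1) := by
      calc r ^ (m+1) ≤ (3 * α) ^ (m+1) := pow_le_pow_left₀ hr0.le hr3 _
        _ = 3 ^ (m+1) * α ^ (m+1) := mul_pow 3 α (m+1)
    have hrm : r ^ m ≤ 3 ^ m * α ^ m := by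
      calc r ^ m ≤ (3 * α) ^ m := pow_le_pow_left₀ hr0.le hr3 _
        _ = 3 ^ m * α ^ m := mul_pow 3 α m
    have h3 : (0:ℝ) < 3 ^ (m+1) := by positivity
    -- r*(r^(m+1)-α^(m+1)) ≤ 2*3^(m+1)*(m+1)*α^(m+1)
    have step : r * (r ^ (m+1) - α ^ (m+1)) ≤ 2 * 3 ^ (m+1) * ((m:ℝ)+1) * α ^ (m+1) := by
      have h1 : r ^ (m+1) - α ^ (m+1) ≤ ((m:ℝ)+1) * 2 * r ^ m := by
        have hw := mul_le_mul_of_nonneg_left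
          (mul_le_mul_of_nonneg_right hrα2 (pow_pos hr0 m).le)
          (show (0:ℝ) ≤ (m:ℝ)+1 by positivity)
        linarith [f2, hw]
      calc r * (r ^ (m+1) - α ^ (m+1)) ≤ r * (((m:ℝ)+1) * 2 * r ^ m) :=
            mul_le_mul_of_nonneg_left h1 hr0.le
        _ = ((m:ℝ)+1) * 2 * r ^ (m+1) := by rw [pow_succ]; ring
        _ ≤ ((m:ℝ)+1) * 2 * (3 ^ (m+1) * α ^ (m+1)) :=
            mul_le_mul_of_nonneg_left hr3p (by positivity)
        _ = 2 * 3 ^ (m+1) * ((m:ℝ)+1) * α ^ (m+1) := by ring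
    rw [div_mul_eq_mul_div, div_le_iff₀ (by positivity)]
    calc 1 * (r * (r ^ (m+1) - α ^ (m+1))) = r * (r ^ (m+1) - α ^ (m+1)) := one_mul _
      _ ≤ 2 * 3 ^ (m+1) * ((m:ℝ)+1) * α ^ (m+1) := step
      _ = ((m:ℝ)+1) * α ^ (m+1) * (2 * 3 ^ (m+1)) := by ring
end

section
/- For any k > 0, ℓ > 0, m > 0 and n ≥ 1, the radial function v(r,t) = k(2 - r + ℓt)/(m(1 + ℓt)) + 1 defined for 1 < r ≤ 2 + ℓt satisfies m·Δ(v - 1)₊ = k(1-n)/(r(1+ℓt)) ≤ 0 ≤ k ℓ (r-1)/(m(1+ℓt)²) = ∂v/∂t on the region {1 < r < 2 + ℓt, t > 0}; in particular v is a supersolution of u_t = mΔ(u-1)₊ there. -/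
theorem stmt_10 (n : ℕ) (hn : 1 ≤ n) (k ℓ m : ℝ) (hk : 0 < k) (hl : 0 < ℓ) (hm : 0 < m)
    (v : ℝ → ℝ → ℝ)
    (hv : ∀ r t : ℝ, v r t = k * (2 - r + ℓ * t) / (m * (1 + ℓ * t)) + 1) :
    ∀ r t : ℝ, 1 < r → r < 2 + ℓ * t → 0 < t →
      (m * (deriv (deriv (fun s : ℝ => max (v s t - 1) 0)) r +
          ((n - 1 : ℝ) / r) * deriv (fun s : ℝ => max (v s t - 1) 0) r)
        = k * (1 - n) / (r * (1 + ℓ * t))) ∧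
      k * (1 - n) / (r * (1 + ℓ * t)) ≤ 0 ∧
      (0 : ℝ) ≤ k * ℓ * (r - 1) / (m * (1 + ℓ * t) ^ 2) ∧
      deriv (fun s : ℝ => v r s) t = k * ℓ * (r - 1) / (m * (1 + ℓ * t) ^ 2) := by
  intro r t hr1 hr2 ht
  have ht0 : (0:ℝ) < 1 + ℓ * t := by nlinarith
  have hmt : m * (1 + ℓ * t) ≠ 0 := by positivity
  have hn' : (1:ℝ) ≤ (n:ℝ) := by exact_mod_cast hn
  have hr0 : (0:ℝ) < r := by linarith
  set c : ℝ := k / (m * (1 + ℓ * t)) with hc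
  have hcpos : 0 < c := by positivity
  have hopen : IsOpen (Set.Iio (2 + ℓ * t)) := isOpen_Iio
  have heq : ∀ s ∈ Set.Iio (2 + ℓ * t),
      max (v s t - 1) 0 = c * (2 - s + ℓ * t) := by
    intro s hs
    have hs' : s < 2 + ℓ * t := hs
    have hspos : 0 ≤ 2 - s + ℓ * t := by linarith
    rw [hv]
    have h1 : k * (2 - s + ℓ * t) / (m * (1 + ℓ * t)) + 1 - 1
        = c * (2 - s + ℓ * t) := by
      rw [hc]; field_simp; ring
    rw [h1, max_eq_left (by positivity)]
  have hderiv_eq : ∀ s ∈ Set.Iio (2 + ℓ * t),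
      deriv (fun x : ℝ => max (v x t - 1) 0) s = -c := by
    intro s hs
    have hev : (fun x : ℝ => max (v x t - 1) 0) =ᶠ[nhds s]
        (fun x : ℝ => c * (2 - x + ℓ * t)) :=
      Filter.eventuallyEq_of_mem (hopen.mem_nhds hs) heq
    rw [hev.deriv_eq]
    have h1 : HasDerivAt (fun x : ℝ => 2 - x + ℓ * t) (-1) s := by
      simpa using ((hasDerivAt_id s).const_sub 2).add_const (ℓ * t)
    have h2 := h1.const_mul c
    simpa using h2.deriv
  have hmem : r ∈ Set.Iio (2 + ℓ * t) := hr2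
  have hd1 : deriv (fun x : ℝ => max (v x t - 1) 0) r = -c := hderiv_eq r hmem
  have hd2 : deriv (deriv (fun x : ℝ => max (v x t - 1) 0)) r = 0 := by
    have hev2 : deriv (fun x : ℝ => max (v x t - 1) 0) =ᶠ[nhds r]
        (fun _ : ℝ => -c) :=
      Filter.eventuallyEq_of_mem (hopen.mem_nhds hmem) hderiv_eq
    rw [hev2.deriv_eq, deriv_const]
  refine ⟨?_, ?_, ?_, ?_⟩
  · rw [hd1, hd2, hc]
    field_simp
    ring
  · apply div_nonpos_of_nonpos_of_nonneg
    · nlinarith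
    · positivity
  · apply div_nonneg
    · nlinarith [mul_pos (mul_pos hk hl) (sub_pos.mpr hr1)]
    · positivity
  · have hfun : (fun s : ℝ => v r s)
        = fun s : ℝ => k * (2 - r + ℓ * s) / (m * (1 + ℓ * s)) + 1 :=
      funext fun s => hv r s
    rw [hfun]
    have hnum : HasDerivAt (fun s : ℝ => k * (2 - r + ℓ * s)) (k * ℓ) t := by
      have := (((hasDerivAt_id t).const_mul ℓ).const_add (2 - r)).const_mul k
      simpa using this
    have hden : HasDerivAt (fun s : ℝ => m * (1 + ℓ * s)) (m * ℓ) t := by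
      have := (((hasDerivAt_id t).const_mul ℓ).const_add 1).const_mul m
      simpa using this
    have hdiv : HasDerivAt (fun s : ℝ => k * (2 - r + ℓ * s) / (m * (1 + ℓ * s)) + 1) _ t :=
      (hnum.div hden hmt).add_const 1
    rw [hdiv.deriv]
    field_simp
    ring
end
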